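/- Let A and B be complex polynomials with deg A = N ≥ 1, deg B = K ≥ 1, ‖A‖ ≤ 1, ‖B‖ ≤ 1, and no common zeros. Then δ(A,B)/3^{max(N,K)} ≤ δ̃(A,B) ≤ δ(A,B), where δ̃(A,B) := inf{|A(z)| + |B(z)| : z ∈ ℂ}. -/

import Mathlib

open Polynomial

/-- The norm of a polynomial: the maximum of the moduli of its coefficients. -/
noncomputable def polyNorm (p : Polynomial ℂ) : ℝ :=
  ⨆ k : ℕ, ‖p.coeff k‖

/-- `δ(A,B)`: the minimum of `|A(z)| + |B(z)|` over all `z` that is a zero of `A` or of `B`. -/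
noncomputable def bezoutDelta (A B : Polynomial ℂ) : ℝ :=
  sInf ((fun z : ℂ => ‖A.eval z‖ + ‖B.eval z‖) ''
    {z : ℂ | A.eval z = 0 ∨ B.eval z = 0})

/-- `δ̃(A,B)`: the infimum of `|A(z)| + |B(z)|` over all `z ∈ ℂ`. -/
noncomputable def deltaTilde (A B : Polynomial ℂ) : ℝ :=
  ⨅ z : ℂ, (‖A.eval z‖ + ‖B.eval z‖)

lemma multiset_prod_map_le {s : Multiset ℂ} {f g : ℂ → ℝ}
    (h0 : ∀ β ∈ s, 0 ≤ f β) (h : ∀ β ∈ s, f β ≤ g β) :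
    (s.map f).prod ≤ (s.map g).prod := by
  induction s using Multiset.induction with
  | empty => simp
  | cons a s ih =>
    simp only [Multiset.map_cons, Multiset.prod_cons]
    have hf0 : (0:ℝ) ≤ (s.map f).prod :=
      Multiset.prod_nonneg (by
        intro x hx
        obtain ⟨b, hb, rfl⟩ := Multiset.mem_map.mp hx
        exact h0 b (Multiset.mem_cons_of_mem hb))
    have hga : 0 ≤ g a := le_trans (h0 a (Multiset.mem_cons_self a s)) (h a (Multiset.mem_cons_self a s))
    exact mul_le_mul (h a (Multiset.mem_cons_self a s))
      (ih (fun b hb => h0 b (Multiset.mem_cons_of_mem hb))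
          (fun b hb => h b (Multiset.mem_cons_of_mem hb))) hf0 hga

lemma key_bound (B : Polynomial ℂ) (hB0 : B ≠ 0) (z α : ℂ)
    (hmin : ∀ β ∈ B.roots, ‖z - α‖ ≤ ‖z - β‖) :
    ‖B.eval α‖ ≤ 2 ^ B.natDegree * ‖B.eval z‖ := by
  have hcard : B.roots.card = B.natDegree :=
    Polynomial.splits_iff_card_roots.mp (IsAlgClosed.splits B)
  have heval : ∀ w : ℂ, ‖B.eval w‖ =
      ‖B.leadingCoeff‖ * (B.roots.map fun β => ‖w - β‖).prod := by
    intro w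
    conv_lhs => rw [(IsAlgClosed.splits B).eq_prod_roots]
    rw [eval_mul, eval_C, norm_mul, eval_multiset_prod, Multiset.map_map,
      show ∀ m : Multiset ℂ, ‖m.prod‖ = (m.map (‖·‖)).prod from fun m => map_multiset_prod normHom m, Multiset.map_map]
    congr 2
    ext β
    simp [Function.comp]
  rw [heval α, heval z]
  have hle : (B.roots.map fun β => ‖α - β‖).prod ≤
      (B.roots.map fun β => 2 * ‖z - β‖).prod := by
    apply multiset_prod_map_le (fun β _ => norm_nonneg _)
    intro β hβ
    calc ‖α - β‖ = ‖(α - z) + (z - β)‖ := by ring_nf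
      _ ≤ ‖α - z‖ + ‖z - β‖ := norm_add_le _ _
      _ ≤ ‖z - β‖ + ‖z - β‖ := by
          rw [norm_sub_rev]
          exact add_le_add_left (hmin β hβ) _
      _ = 2 * ‖z - β‖ := by ring
  have h2 : (B.roots.map fun β => 2 * ‖z - β‖).prod =
      2 ^ B.natDegree * (B.roots.map fun β => ‖z - β‖).prod := by
    rw [show (fun β => 2 * ‖z - β‖) =
      (fun β => (fun _ => (2:ℝ)) β * (fun β => ‖z - β‖) β) from rfl,
      Multiset.prod_map_mul, Multiset.map_const', Multiset.prod_replicate, hcard]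
  calc ‖B.leadingCoeff‖ * (B.roots.map fun β => ‖α - β‖).prod
      ≤ ‖B.leadingCoeff‖ * (B.roots.map fun β => 2 * ‖z - β‖).prod :=
        mul_le_mul_of_nonneg_left hle (norm_nonneg _)
    _ = 2 ^ B.natDegree * (‖B.leadingCoeff‖ *
        (B.roots.map fun β => ‖z - β‖).prod) := by rw [h2]; ring

/-- **Equivalence of the two separation quantities:**
`δ(A,B) / 3^(max N K) ≤ δ̃(A,B) ≤ δ(A,B)`. -/
theorem deltas_equivalent (N K : ℕ) (hN : 1 ≤ N) (hK : 1 ≤ K)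
    (A B : Polynomial ℂ) (hA : A.natDegree = N) (hB : B.natDegree = K)
    (hnA : polyNorm A ≤ 1) (hnB : polyNorm B ≤ 1)
    (hcop : ∀ z : ℂ, ¬(A.eval z = 0 ∧ B.eval z = 0)) :
    bezoutDelta A B / 3 ^ max N K ≤ deltaTilde A B ∧ deltaTilde A B ≤ bezoutDelta A B := by
  have hA0 : A ≠ 0 := by intro h; rw [h] at hA; simp at hA; omega
  have hB0 : B ≠ 0 := by intro h; rw [h] at hB; simp at hB; omega
  have hAc : A.roots.card = N := by
    rw [Polynomial.splits_iff_card_roots.mp (IsAlgClosed.splits A), hA]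
  have hBc : B.roots.card = K := by
    rw [Polynomial.splits_iff_card_roots.mp (IsAlgClosed.splits B), hB]
  have hbdd : BddBelow ((fun z : ℂ => ‖A.eval z‖ + ‖B.eval z‖) ''
      {z : ℂ | A.eval z = 0 ∨ B.eval z = 0}) := by
    refine ⟨0, ?_⟩
    rintro y ⟨w, _, rfl⟩
    positivity
  have hδle : ∀ w : ℂ, (A.eval w = 0 ∨ B.eval w = 0) →
      bezoutDelta A B ≤ ‖A.eval w‖ + ‖B.eval w‖ := by
    intro w hw
    exact csInf_le hbdd ⟨w, hw, rfl⟩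
  -- zero set nonempty
  have hne : ∃ w : ℂ, A.eval w = 0 := by
    have : 0 < A.degree := by
      rw [Polynomial.degree_eq_natDegree hA0, hA]
      exact_mod_cast hN
    obtain ⟨w, hw⟩ := Complex.exists_root this
    exact ⟨w, hw⟩
  constructor
  · -- hard direction
    have hpow : (0:ℝ) < 3 ^ max N K := by positivity
    unfold deltaTilde
    apply le_ciInf
    intro z
    rw [div_le_iff₀ hpow]
    -- find nearest root
    have hRne : (A.roots + B.roots).toFinset.Nonempty := by
      rw [Multiset.toFinset_nonempty]
      intro h
      have := hAc
      rw [Multiset.eq_zero_iff_forall_notMem] at h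
      obtain ⟨w, hw⟩ := hne
      exact h w (Multiset.mem_add.mpr (Or.inl ((Polynomial.mem_roots hA0).mpr hw)))
    obtain ⟨α, hαT, hαmin⟩ :=
      Finset.exists_min_image (A.roots + B.roots).toFinset (fun w => ‖z - w‖) hRne
    have hmem := Multiset.mem_toFinset.mp hαT
    have habs0 : (0:ℝ) ≤ ‖A.eval z‖ + ‖B.eval z‖ := by positivity
    have h23 : ∀ m : ℕ, (2:ℝ) ^ m ≤ 3 ^ max N K → True := fun _ _ => trivial
    rcases Multiset.mem_add.mp hmem with hαA | hαB
    · have hz : A.eval α = 0 := (Polynomial.mem_roots hA0).mp hαA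
      have hkey := key_bound B hB0 z α (fun β hβ =>
        hαmin β (Multiset.mem_toFinset.mpr (Multiset.mem_add.mpr (Or.inr hβ))))
      rw [hB] at hkey
      have h1 : bezoutDelta A B ≤ ‖B.eval α‖ := by
        have := hδle α (Or.inl hz)
        rwa [hz, norm_zero, zero_add] at this
      have h2 : (2:ℝ) ^ K ≤ 3 ^ max N K := by
        calc (2:ℝ) ^ K ≤ 3 ^ K := pow_le_pow_left₀ (by norm_num) (by norm_num) K
          _ ≤ 3 ^ max N K := pow_le_pow_right₀ (by norm_num) (le_max_right N K)
      calc bezoutDelta A B ≤ 2 ^ K * ‖B.eval z‖ := h1.trans hkey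
        _ ≤ 3 ^ max N K * (‖A.eval z‖ + ‖B.eval z‖) := by
            apply mul_le_mul h2 (le_add_of_nonneg_left (by positivity)) (norm_nonneg _) (by positivity)
        _ = (‖A.eval z‖ + ‖B.eval z‖) * 3 ^ max N K := by ring
    · have hz : B.eval α = 0 := (Polynomial.mem_roots hB0).mp hαB
      have hkey := key_bound A hA0 z α (fun β hβ =>
        hαmin β (Multiset.mem_toFinset.mpr (Multiset.mem_add.mpr (Or.inl hβ))))
      rw [hA] at hkey
      have h1 : bezoutDelta A B ≤ ‖A.eval α‖ := by
        have := hδle α (Or.inr hz)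
        rwa [hz, norm_zero, add_zero] at this
      have h2 : (2:ℝ) ^ N ≤ 3 ^ max N K := by
        calc (2:ℝ) ^ N ≤ 3 ^ N := pow_le_pow_left₀ (by norm_num) (by norm_num) N
          _ ≤ 3 ^ max N K := pow_le_pow_right₀ (by norm_num) (le_max_left N K)
      calc bezoutDelta A B ≤ 2 ^ N * ‖A.eval z‖ := h1.trans hkey
        _ ≤ 3 ^ max N K * (‖A.eval z‖ + ‖B.eval z‖) := by
            apply mul_le_mul h2 (le_add_of_nonneg_right (by positivity)) (norm_nonneg _) (by positivity)
        _ = (‖A.eval z‖ + ‖B.eval z‖) * 3 ^ max N K := by ring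
  · -- easy direction
    apply le_csInf
    · obtain ⟨w, hw⟩ := hne
      exact ⟨_, ⟨w, Or.inl hw, rfl⟩⟩
    · rintro b ⟨w, _, rfl⟩
      exact ciInf_le ⟨0, by rintro y ⟨u, rfl⟩; positivity⟩ w
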